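/- Let ℓ ≥ 7 be an integer. The graph W(ℓ) contains no cycle of length less than ℓ, i.e., W(ℓ) has girth at least ℓ. -/

import Mathlib

open SimpleGraph

/-- The subdivided wheel `W(ℓ)`: a cycle `v_0 ⋯ v_{3ℓ-12}` of length `3ℓ-11` (the vertices
`Sum.inl i`), together with a center `c = Sum.inr 0` and three midpoints
`m_1, m_2, m_3 = Sum.inr 1, 2, 3`, where `c` is adjacent to each `m_k`, and `m_1, m_2, m_3`
are adjacent to `v_0`, `v_{ℓ-4}`, `v_{2ℓ-8}` respectively. -/
def WGraph (ℓ : ℕ) : SimpleGraph (Fin (3 * ℓ - 11) ⊕ Fin 4) :=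
  SimpleGraph.fromRel (fun u v =>
    (∃ i j : Fin (3 * ℓ - 11), u = .inl i ∧ v = .inl j ∧
      ((i : ℕ) + 1) % (3 * ℓ - 11) = (j : ℕ)) ∨
    (∃ k : Fin 4, (k : ℕ) ≠ 0 ∧ u = .inr 0 ∧ v = .inr k) ∨
    (∃ i : Fin (3 * ℓ - 11), (i : ℕ) = 0 ∧ u = .inr 1 ∧ v = .inl i) ∨
    (∃ i : Fin (3 * ℓ - 11), (i : ℕ) = ℓ - 4 ∧ u = .inr 2 ∧ v = .inl i) ∨
    (∃ i : Fin (3 * ℓ - 11), (i : ℕ) = 2 * ℓ - 8 ∧ u = .inr 3 ∧ v = .inl i))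

namespace WAux

variable {ℓ : ℕ}

/-- The attachment index of midpoint `t`. -/
def att (ℓ : ℕ) (t : Fin 4) : ℕ := if t = 1 then 0 else if t = 2 then ℓ - 4 else 2 * ℓ - 8

lemma att_cases (t : Fin 4) : att ℓ t = 0 ∨ att ℓ t = ℓ - 4 ∨ att ℓ t = 2 * ℓ - 8 := by
  unfold att; split
  · exact Or.inl rfl
  · split
    · exact Or.inr (Or.inl rfl)
    · exact Or.inr (Or.inr rfl)

lemma att_inj (hℓ : 7 ≤ ℓ) {s t : Fin 4} (hs : (s : ℕ) ≠ 0) (ht : (t : ℕ) ≠ 0)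
    (h : att ℓ s = att ℓ t) : s = t := by
  fin_cases s <;> fin_cases t <;> simp_all [att] <;> omega

lemma adj_inr0 {v} (h : (WGraph ℓ).Adj (.inr 0) v) :
    ∃ t : Fin 4, (t : ℕ) ≠ 0 ∧ v = .inr t := by
  rw [WGraph, fromRel_adj] at h
  obtain ⟨hne, h | h⟩ := h <;>
    rcases h with ⟨i, j, h1, h2, h3⟩ | ⟨k, hk, h1, h2⟩ | ⟨i, hi, h1, h2⟩ | ⟨i, hi, h1, h2⟩ |
      ⟨i, hi, h1, h2⟩ <;> simp_all

lemma adj_inrt {t : Fin 4} (ht : (t : ℕ) ≠ 0) {v} (h : (WGraph ℓ).Adj (.inr t) v) :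
    v = .inr 0 ∨ ∃ i : Fin (3 * ℓ - 11), v = .inl i ∧ (i : ℕ) = att ℓ t := by
  rw [WGraph, fromRel_adj] at h
  obtain ⟨hne, h | h⟩ := h <;>
    rcases h with ⟨i, j, h1, h2, h3⟩ | ⟨k, hk, h1, h2⟩ | ⟨i, hi, h1, h2⟩ | ⟨i, hi, h1, h2⟩ |
      ⟨i, hi, h1, h2⟩ <;> simp_all [att]

lemma adj_inl (hℓ : 7 ≤ ℓ) {i j : Fin (3 * ℓ - 11)} (h : (WGraph ℓ).Adj (.inl i) (.inl j)) :
    ((j : ℕ) : ZMod (3 * ℓ - 11)) = (i : ℕ) + 1 ∨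
      ((j : ℕ) : ZMod (3 * ℓ - 11)) = (i : ℕ) - 1 := by
  rw [WGraph, fromRel_adj] at h
  obtain ⟨hne, h | h⟩ := h <;>
    rcases h with ⟨a, b, h1, h2, h3⟩ | ⟨k, hk, h1, h2⟩ | ⟨a, ha, h1, h2⟩ | ⟨a, ha, h1, h2⟩ |
      ⟨a, ha, h1, h2⟩ <;> simp_all
  · left
    rw [← h3]
    push_cast [ZMod.natCast_mod]
    ring
  · right
    rw [eq_sub_iff_add_eq, ← h3]
    push_cast [ZMod.natCast_mod]
    ring

lemma cast_injF (hℓ : 7 ≤ ℓ) {i j : Fin (3 * ℓ - 11)}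
    (h : ((i : ℕ) : ZMod (3 * ℓ - 11)) = ((j : ℕ) : ZMod (3 * ℓ - 11))) : i = j := by
  haveI : NeZero (3 * ℓ - 11) := ⟨by omega⟩
  have := congrArg ZMod.val h
  rw [ZMod.val_natCast, ZMod.val_natCast, Nat.mod_eq_of_lt i.isLt, Nat.mod_eq_of_lt j.isLt] at this
  exact Fin.ext this

/-- cyclic distance of `a` from `0` in `ZMod n`. -/
def ddist (n : ℕ) (a : ZMod n) : ℕ := min a.val (-a).val

lemma ddist_neg {n : ℕ} (a : ZMod n) : ddist n (-a) = ddist n a := by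
  rw [ddist, ddist, neg_neg, min_comm]

lemma ddist_zero {n : ℕ} : ddist n 0 = 0 := by simp [ddist]

lemma ddist_add_one {n : ℕ} [NeZero n] (hn : 2 ≤ n) (a : ZMod n) :
    ddist n (a + 1) ≤ ddist n a + 1 := by
  by_cases h0 : a + 1 = 0
  · simp [h0, ddist_zero]
  by_cases h1 : a = 0
  · subst h1
    have : ((0 : ZMod n) + 1).val = 1 := by
      haveI : Fact (1 < n) := ⟨hn⟩
      simp [ZMod.val_one]
    calc ddist n (0 + 1) ≤ ((0 : ZMod n) + 1).val := min_le_left _ _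
    _ = 1 := this
    _ ≤ _ := by omega
  · haveI : Fact (1 < n) := ⟨hn⟩
    have hva : a.val < n := ZMod.val_lt a
    have hv1 : (a + 1).val = (a.val + 1) % n := by rw [ZMod.val_add, ZMod.val_one]
    have hne : a.val + 1 ≠ n := by
      intro h
      apply h0
      rw [← ZMod.val_eq_zero, hv1, h, Nat.mod_self]
    have hlt : a.val + 1 < n := by omega
    have hv1' : (a + 1).val = a.val + 1 := by rw [hv1, Nat.mod_eq_of_lt hlt]
    have hn1 : (-(a + 1)).val = n - (a.val + 1) := by
      rw [ZMod.neg_val, if_neg h0, hv1']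
    have hna : (-a).val = n - a.val := by rw [ZMod.neg_val, if_neg h1]
    have hv0 : a.val ≠ 0 := fun h => h1 (ZMod.val_eq_zero a |>.1 h)
    rw [ddist, ddist, hv1', hn1, hna]
    omega

lemma ddist_sub_one {n : ℕ} [NeZero n] (hn : 2 ≤ n) (a : ZMod n) :
    ddist n (a - 1) ≤ ddist n a + 1 := by
  have : a - 1 = -(-a + 1) := by ring
  rw [this, ddist_neg]
  calc ddist n (-a + 1) ≤ ddist n (-a) + 1 := ddist_add_one hn _
  _ = ddist n a + 1 := by rw [ddist_neg]

lemma ddist_cast {n : ℕ} [NeZero n] (d : ℕ) (h1 : 0 < d) (h2 : d < n) :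
    ddist n ((d : ZMod n)) = min d (n - d) := by
  have hv : ((d : ZMod n)).val = d := by rw [ZMod.val_natCast, Nat.mod_eq_of_lt h2]
  have hne : (d : ZMod n) ≠ 0 := by
    intro h
    rw [← ZMod.val_eq_zero, hv] at h
    omega
  rw [ddist, hv, ZMod.neg_val, if_neg hne, hv]

lemma ddist_sub_nat {n : ℕ} [NeZero n] (p q : ℕ) (hpq : p ≤ q) :
    ddist n ((q : ZMod n) - (p : ZMod n)) = ddist n (((q - p : ℕ) : ZMod n)) := by
  congr 1
  have : (q : ZMod n) = ((q - p : ℕ) : ZMod n) + (p : ZMod n) := by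
    rw [← Nat.cast_add]
    congr 1
    omega
  rw [this]
  ring

/-- The key numerical bound for pairs of attachment points. -/
lemma ddist_att (hℓ : 7 ≤ ℓ) (p q : ℕ)
    (hp : p = 0 ∨ p = ℓ - 4 ∨ p = 2 * ℓ - 8) (hq : q = 0 ∨ q = ℓ - 4 ∨ q = 2 * ℓ - 8)
    (hpq : p ≠ q) :
    ℓ - 4 ≤ ddist (3 * ℓ - 11) ((q : ZMod (3 * ℓ - 11)) - (p : ZMod (3 * ℓ - 11))) := by
  haveI : NeZero (3 * ℓ - 11) := ⟨by omega⟩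
  have key : ∀ a b : ℕ, a < b → b < 3 * ℓ - 11 → ℓ - 4 ≤ b - a → ℓ - 4 ≤ (3 * ℓ - 11) - (b - a) →
      ℓ - 4 ≤ ddist (3 * ℓ - 11) ((b : ZMod (3 * ℓ - 11)) - (a : ZMod (3 * ℓ - 11))) := by
    intro a b hab hb h1 h2
    rw [ddist_sub_nat a b hab.le, ddist_cast (b - a) (by omega) (by omega)]
    omega
  have sym : ∀ a b : ℕ, ddist (3 * ℓ - 11) ((b : ZMod (3 * ℓ - 11)) - a) =
      ddist (3 * ℓ - 11) ((a : ZMod (3 * ℓ - 11)) - b) := by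
    intro a b
    rw [← ddist_neg]
    congr 1
    ring
  rcases hp with rfl | rfl | rfl <;> rcases hq with rfl | rfl | rfl
  · omega
  · exact key 0 (ℓ - 4) (by omega) (by omega) (by omega) (by omega)
  · exact key 0 (2 * ℓ - 8) (by omega) (by omega) (by omega) (by omega)
  · rw [sym]; exact key 0 (ℓ - 4) (by omega) (by omega) (by omega) (by omega)
  · omega
  · exact key (ℓ - 4) (2 * ℓ - 8) (by omega) (by omega) (by omega) (by omega)
  · rw [sym]; exact key 0 (2 * ℓ - 8) (by omega) (by omega) (by omega) (by omega)
  · rw [sym]; exact key (ℓ - 4) (2 * ℓ - 8) (by omega) (by omega) (by omega) (by omega)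
  · omega

lemma rim_bound (hℓ : 7 ≤ ℓ) {a b} (w : (WGraph ℓ).Walk a b)
    (hsup : ∀ t : Fin 4, Sum.inr t ∉ w.support) :
    ∀ x y : Fin (3 * ℓ - 11), a = .inl x → b = .inl y →
      ddist (3 * ℓ - 11) (((y : ℕ) : ZMod (3 * ℓ - 11)) - ((x : ℕ) : ZMod (3 * ℓ - 11))) ≤
        w.length := by
  haveI : NeZero (3 * ℓ - 11) := ⟨by omega⟩
  induction w with
  | nil =>
    intro x y hx hy
    rw [hx] at hy
    obtain rfl : x = y := Sum.inl_injective hy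
    simp [ddist_zero]
  | @cons a m b h p ih =>
    intro x y hx hy
    subst hx
    obtain ⟨x', rfl⟩ : ∃ x', m = Sum.inl x' := by
      cases m with
      | inl x' => exact ⟨x', rfl⟩
      | inr t =>
        exact absurd (by simp [Walk.support_cons, Walk.start_mem_support]) (hsup t)
    have hsup' : ∀ t : Fin 4, Sum.inr t ∉ p.support := by
      intro t ht
      exact hsup t (by simp [Walk.support_cons, ht])
    have ihx := ih hsup' x' y rfl hy
    have key : ddist (3 * ℓ - 11) (((y : ℕ) : ZMod (3 * ℓ - 11)) - ((x : ℕ) : ZMod _)) ≤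
        ddist (3 * ℓ - 11) (((y : ℕ) : ZMod (3 * ℓ - 11)) - ((x' : ℕ) : ZMod _)) + 1 := by
      rcases adj_inl hℓ h with hstep | hstep
      · have heq : ((y : ℕ) : ZMod (3 * ℓ - 11)) - ((x : ℕ) : ZMod _) =
            (((y : ℕ) : ZMod (3 * ℓ - 11)) - ((x' : ℕ) : ZMod _)) + 1 := by
          rw [hstep]; ring
        rw [heq]
        exact ddist_add_one (by omega) _
      · have heq : ((y : ℕ) : ZMod (3 * ℓ - 11)) - ((x : ℕ) : ZMod _) =
            (((y : ℕ) : ZMod (3 * ℓ - 11)) - ((x' : ℕ) : ZMod _)) - 1 := by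
          rw [hstep]; ring
        rw [heq]
        exact ddist_sub_one (by omega) _
    rw [Walk.length_cons]
    omega

lemma trail_dir (hℓ : 7 ≤ ℓ) {a b} (w : (WGraph ℓ).Walk a b) (hw : w.IsTrail)
    (hsup : ∀ t : Fin 4, Sum.inr t ∉ w.support) :
    ∀ x y : Fin (3 * ℓ - 11), a = .inl x → b = .inl y → 1 ≤ w.length →
    ∃ s : ZMod (3 * ℓ - 11), (s = 1 ∨ s = -1) ∧
      ((y : ℕ) : ZMod (3 * ℓ - 11)) = (x : ℕ) + (w.length : ℕ) * s ∧
      ∃ x1 : Fin (3 * ℓ - 11), w.getVert 1 = .inl x1 ∧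
        ((x1 : ℕ) : ZMod (3 * ℓ - 11)) = (x : ℕ) + s := by
  haveI : NeZero (3 * ℓ - 11) := ⟨by omega⟩
  induction w with
  | nil => intro x y hx hy hlen; simp at hlen
  | @cons a m b h p ih =>
    intro x y hx hy hlen
    subst hx
    obtain ⟨x', rfl⟩ : ∃ x', m = Sum.inl x' := by
      cases m with
      | inl x' => exact ⟨x', rfl⟩
      | inr t =>
        exact absurd (by simp [Walk.support_cons, Walk.start_mem_support]) (hsup t)
    have hsup' : ∀ t : Fin 4, Sum.inr t ∉ p.support := by
      intro t ht
      exact hsup t (by simp [Walk.support_cons, ht])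
    have hwp : p.IsTrail ∧ _ := (Walk.isTrail_cons h p).mp hw
    have hg1 : (Walk.cons h p).getVert 1 = Sum.inl x' := ((Walk.getVert_cons_succ (n := 0) p h).trans (Walk.getVert_zero p))
    cases p with
    | nil =>
      obtain rfl : x' = y := Sum.inl_injective hy
      rcases adj_inl hℓ h with hstep | hstep
      · exact ⟨1, Or.inl rfl, by simpa using hstep, x', hg1, by simpa using hstep⟩
      · refine ⟨-1, Or.inr rfl, ?_, x', hg1, by rw [hstep]; ring⟩
        simp only [Walk.length_cons, Walk.length_nil]
        push_cast
        rw [hstep]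
        ring
    | @cons m' z b h2 p2 =>
      obtain ⟨s, hs, hy', x1, hx1, hx1v⟩ :=
        ih hwp.1 hsup' x' y rfl hy (by simp [Walk.length_cons])
      have hz : z = Sum.inl x1 := by rw [← hx1]; exact ((Walk.getVert_cons_succ (n := 0) p2 h2).trans (Walk.getVert_zero p2)).symm
      subst hz
      have hmem : s(Sum.inl x', (Sum.inl x1 : Fin (3 * ℓ - 11) ⊕ Fin 4)) ∈
          (Walk.cons h2 p2).edges := by
        simp [Walk.edges_cons]
      have hne : (Sum.inl x : Fin (3 * ℓ - 11) ⊕ Fin 4) ≠ Sum.inl x1 := by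
        intro hcontra
        exact hwp.2 (by rw [hcontra, Sym2.eq_swap]; exact hmem)
      have hxx1 : ((x : ℕ) : ZMod (3 * ℓ - 11)) ≠ ((x1 : ℕ) : ZMod (3 * ℓ - 11)) := by
        intro hcontra
        exact hne (by rw [cast_injF hℓ hcontra])
      rcases adj_inl hℓ h with hstep | hstep
      · have hs1 : s = 1 := by
          rcases hs with rfl | rfl
          · rfl
          · exfalso; apply hxx1; rw [hx1v, hstep]; ring
        subst hs1
        refine ⟨1, Or.inl rfl, ?_, x', hg1, by rw [hstep]⟩
        simp only [Walk.length_cons] at hy' ⊢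
        rw [hy', hstep]
        push_cast
        ring
      · have hs1 : s = -1 := by
          rcases hs with rfl | rfl
          · exfalso; apply hxx1; rw [hx1v, hstep]; ring
          · rfl
        subst hs1
        refine ⟨-1, Or.inr rfl, ?_, x', hg1, by rw [hstep]; ring⟩
        simp only [Walk.length_cons] at hy' ⊢
        rw [hy', hstep]
        push_cast
        ring

lemma caseA (hℓ : 7 ≤ ℓ) {x : Fin (3 * ℓ - 11)} (D : (WGraph ℓ).Walk (.inl x) (.inl x))
    (hD : D.IsCycle) (hall : ∀ t : Fin 4, Sum.inr t ∉ D.support) : ℓ ≤ D.length := by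
  haveI : NeZero (3 * ℓ - 11) := ⟨by omega⟩
  have h3 := hD.three_le_length
  obtain ⟨s, hs, hcl, -⟩ :=
    trail_dir hℓ D hD.isCircuit.isTrail hall x x rfl rfl (by omega)
  have hL : ((D.length : ℕ) : ZMod (3 * ℓ - 11)) * s = 0 := by
    have := hcl.symm
    rwa [add_eq_left] at this
  have hL0 : ((D.length : ℕ) : ZMod (3 * ℓ - 11)) = 0 := by
    rcases hs with rfl | rfl
    · simpa using hL
    · have := congrArg (· * (-1 : ZMod (3 * ℓ - 11))) hL
      simpa using this
  have hdvd : (3 * ℓ - 11) ∣ D.length := (ZMod.natCast_eq_zero_iff _ _).mp hL0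
  have := Nat.le_of_dvd (by omega) hdvd
  omega

lemma not_nodup_closed {V : Type*} {G : SimpleGraph V} {x : V} (w : G.Walk x x)
    (hw : w ≠ Walk.nil) : ¬ w.support.Nodup := by
  cases w with
  | nil => exact absurd rfl hw
  | cons h p => simp [Walk.support_cons, List.nodup_cons, Walk.end_mem_support]

lemma mem_support_closed {V : Type*} {G : SimpleGraph V} {x u : V} (w : G.Walk x x)
    (hw : 0 < w.length) : u ∈ w.support ↔ u ∈ w.support.tail := by
  cases w with
  | nil => simp at hw
  | cons h p =>
    simp only [Walk.support_cons, List.tail_cons, List.mem_cons]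
    exact ⟨fun h' => h'.elim (fun e => e ▸ p.end_mem_support) id, Or.inr⟩

lemma caseC {t : Fin 4} (ht : (t : ℕ) ≠ 0) (D : (WGraph ℓ).Walk (.inr t) (.inr t))
    (hD : D.IsCycle) : (Sum.inr 0 : Fin (3 * ℓ - 11) ⊕ Fin 4) ∈ D.support := by
  have h3 := hD.three_le_length
  cases D with
  | nil => simp at h3
  | cons h1 p =>
    have hnd : p.support.Nodup := by
      have := hD.support_nodup
      simpa [Walk.support_cons] using this
    rcases adj_inrt ht h1 with hv | ⟨i, hv, hvi⟩
    · subst hv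
      simp [Walk.support_cons, Walk.start_mem_support]
    · subst hv
      -- p : Walk (inl i) (inr t)
      cases hq : p.reverse with
      | cons h2 r =>
        -- h2 : Adj (inr t) w2, r : Walk w2 (inl i)
        rcases adj_inrt ht h2 with hv2 | ⟨i2, hv2, hvi2⟩
        · subst hv2
          have hmem : (Sum.inr 0 : Fin (3 * ℓ - 11) ⊕ Fin 4) ∈ p.reverse.support := by
            rw [hq]
            simp [Walk.support_cons, Walk.start_mem_support]
          rw [Walk.support_reverse, List.mem_reverse] at hmem
          simp [Walk.support_cons, hmem]
        · exfalso
          subst hv2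
          obtain rfl : i2 = i := Fin.ext (by rw [hvi2, hvi])
          -- r : Walk (inl i) (inl i)
          have hrne : r ≠ Walk.nil := by
            intro hr
            subst hr
            have := Walk.length_reverse p
            rw [hq] at this
            simp only [Walk.length_cons, Walk.length_nil] at this
            simp only [Walk.length_cons] at h3
            omega
          have hpsup : p.support = r.reverse.support ++ [Sum.inr t] := by
            have : p = r.reverse.append (Walk.cons h2.symm Walk.nil) := by
              rw [← Walk.reverse_reverse p, hq, Walk.reverse_cons]
            rw [this, Walk.support_append]
            simp [Walk.support_cons]
          rw [hpsup] at hnd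
          exact not_nodup_closed r.reverse
            (fun hn => hrne (by rw [← Walk.reverse_reverse r, hn]; rfl))
            hnd.of_append_left

lemma caseB (hℓ : 7 ≤ ℓ) (D : (WGraph ℓ).Walk (.inr 0) (.inr 0)) (hD : D.IsCycle) :
    ℓ ≤ D.length := by
  haveI : NeZero (3 * ℓ - 11) := ⟨by omega⟩
  have h3 := hD.three_le_length
  cases D with
  | nil => simp at h3
  | cons h1 p =>
    obtain ⟨j, hj0, hj⟩ := adj_inr0 h1
    subst hj
    have hnd : p.support.Nodup := by
      have := hD.support_nodup
      simpa [Walk.support_cons] using this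
    cases p with
    | nil => simp at hj0
    | cons h2 q =>
      -- h2 : Adj (inr j) w2
      rcases adj_inrt hj0 h2 with hv | ⟨aj, hv, haj⟩
      · -- w2 = inr 0 : short circuit back to the center
        subst hv
        exfalso
        have hq : q.support.Nodup := by
          simp only [Walk.support_cons, List.nodup_cons] at hnd
          exact hnd.2
        have hqne : q ≠ Walk.nil := by
          intro hn
          subst hn
          simp only [Walk.length_cons, Walk.length_nil] at h3
          omega
        exact not_nodup_closed q hqne hq
      · subst hv
        -- q : Walk (inl aj) (inr 0)
        have hndq : q.support.Nodup := by
          simp only [Walk.support_cons, List.nodup_cons] at hnd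
          exact hnd.2
        have hjq : (Sum.inr j : Fin (3 * ℓ - 11) ⊕ Fin 4) ∉ q.support := by
          simp only [Walk.support_cons, List.nodup_cons] at hnd
          exact hnd.1
        cases hq : q.reverse with
        | cons h3' r1 =>
          -- h3' : Adj (inr 0) w3
          obtain ⟨k, hk0, hk⟩ := adj_inr0 h3'
          subst hk
          cases r1 with
          | cons h4 r =>
            -- h4 : Adj (inr k) w4, r : Walk w4 (inl aj)
            have hndrev : q.reverse.support.Nodup := by
              rw [Walk.support_reverse]
              exact List.nodup_reverse.mpr hndq
            rw [hq] at hndrev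
            simp only [Walk.support_cons, List.nodup_cons, List.mem_cons] at hndrev
            rcases adj_inrt hk0 h4 with hv4 | ⟨ak, hv4, hak⟩
            · -- w4 = inr 0 : center repeats
              exfalso
              subst hv4
              exact hndrev.1 (Or.inr r.start_mem_support)
            · subst hv4
              -- r : Walk (inl ak) (inl aj)
              have hlenq : q.length = r.length + 2 := by
                have := Walk.length_reverse q
                rw [hq] at this
                simp only [Walk.length_cons] at this
                omega
              have hsub : ∀ z, z ∈ r.support → z ∈ q.support := by
                intro z hz
                have : z ∈ q.reverse.support := by
                  rw [hq]
                  simp [Walk.support_cons, hz]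
                rwa [Walk.support_reverse, List.mem_reverse] at this
              have hjk : j ≠ k := by
                intro hcontra
                apply hjq
                have : (Sum.inr k : Fin (3 * ℓ - 11) ⊕ Fin 4) ∈ q.reverse.support := by
                  rw [hq]
                  simp [Walk.support_cons, Walk.start_mem_support]
                rw [Walk.support_reverse, List.mem_reverse] at this
                rwa [hcontra]
              -- every vertex of r is on the rim
              obtain ⟨h0k, h0r, hkr, hndr⟩ :
                  (Sum.inr 0 : Fin (3 * ℓ - 11) ⊕ Fin 4) ≠ Sum.inr k ∧
                  (Sum.inr 0 : Fin (3 * ℓ - 11) ⊕ Fin 4) ∉ r.support ∧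
                  (Sum.inr k : Fin (3 * ℓ - 11) ⊕ Fin 4) ∉ r.support ∧
                  r.support.Nodup := by
                constructor
                · exact fun hc => hndrev.1 (Or.inl hc)
                constructor
                · exact fun hc => hndrev.1 (Or.inr hc)
                exact hndrev.2
              have hall : ∀ t : Fin 4, Sum.inr t ∉ r.support := by
                intro t hmem
                by_cases ht0 : (t : ℕ) = 0
                · obtain rfl : t = 0 := Fin.ext (by simpa using ht0)
                  exact h0r hmem
                by_cases htk : t = k
                · subst htk
                  exact hkr hmem
                by_cases htj : t = j
                · subst htj
                  exact hjq (hsub _ hmem)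
                -- t is the third midpoint: both its neighbours on r equal its attachment
                obtain ⟨r1', r2', hsplit⟩ := Walk.mem_support_iff_exists_append.mp hmem
                have hrsupp : r.support = r1'.support ++ r2'.support.tail := by
                  rw [hsplit, Walk.support_append]
                cases r2' with
                | cons h5 r2'' =>
                  -- h5 : Adj (inr t) w5
                  rcases adj_inrt ht0 h5 with hv5 | ⟨ct, hv5, hct⟩
                  · apply h0r
                    rw [hrsupp]
                    apply List.mem_append_right
                    simp only [Walk.support_cons, List.tail_cons]
                    rw [← hv5]
                    exact r2''.start_mem_support
                  · subst hv5
                    -- predecessor side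
                    cases hr1 : r1'.reverse with
                    | cons h6 r1'' =>
                      -- h6 : Adj (inr t) w6
                      rcases adj_inrt ht0 h6 with hv6 | ⟨ct2, hv6, hct2⟩
                      · apply h0r
                        rw [hrsupp]
                        apply List.mem_append_left
                        have : (Sum.inr 0 : Fin (3 * ℓ - 11) ⊕ Fin 4) ∈ r1'.reverse.support := by
                          rw [hr1, Walk.support_cons]
                          exact List.mem_cons_of_mem _ (hv6 ▸ r1''.start_mem_support)
                        rwa [Walk.support_reverse, List.mem_reverse] at this
                      · have hctt : ct2 = ct := Fin.ext (by rw [hct2, hct])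
                        rw [hctt] at hv6
                        have hmem1 : (Sum.inl ct : Fin (3 * ℓ - 11) ⊕ Fin 4) ∈ r1'.support := by
                          have : (Sum.inl ct : Fin (3 * ℓ - 11) ⊕ Fin 4) ∈
                              r1'.reverse.support := by
                            rw [hr1, Walk.support_cons]
                            exact List.mem_cons_of_mem _ (hv6 ▸ r1''.start_mem_support)
                          rwa [Walk.support_reverse, List.mem_reverse] at this
                        have hmem2 : (Sum.inl ct : Fin (3 * ℓ - 11) ⊕ Fin 4) ∈
                            r2''.support := r2''.start_mem_support
                        have hdisj := List.disjoint_of_nodup_append (hrsupp ▸ hndr)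
                        exact hdisj hmem1 (by
                          simpa only [Walk.support_cons, List.tail_cons] using hmem2)
              -- the rim walk bound
              have hbd := rim_bound hℓ r hall ak aj rfl rfl
              rw [hak, haj] at hbd
              have hval := ddist_att hℓ (att ℓ k) (att ℓ j) (att_cases k) (att_cases j)
                (fun hc => hjk ((att_inj hℓ hk0 hj0 hc).symm))
              have hfin : ℓ - 4 ≤ r.length := le_trans hval hbd
              simp only [Walk.length_cons]
              omega

end WAux

/-- For `ℓ ≥ 7`, the graph `W(ℓ)` has girth at least `ℓ`: it contains
no cycle of length less than `ℓ`. -/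
theorem stmt9 (ℓ : ℕ) (hℓ : 7 ≤ ℓ) :
    ∀ (v : Fin (3 * ℓ - 11) ⊕ Fin 4) (c : (WGraph ℓ).Walk v v),
      c.IsCycle → ℓ ≤ c.length := by
  intro v C hC
  rcases Classical.em ((Sum.inr 0 : Fin (3 * ℓ - 11) ⊕ Fin 4) ∈ C.support) with h0 | h0
  · have hrot := hC.rotate h0
    have hlen : (C.rotate _ h0).length = C.length := by
      have h1 := Walk.rotate_edges C _ h0
      have h2 := h1.perm.length_eq
      rwa [Walk.length_edges, Walk.length_edges] at h2
    rw [← hlen]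
    exact WAux.caseB hℓ _ hrot
  · rcases Classical.em (∃ t : Fin 4, Sum.inr t ∈ C.support) with hm | hm
    · exfalso
      obtain ⟨t, ht⟩ := hm
      have ht0 : (t : ℕ) ≠ 0 := by
        intro h
        obtain rfl : t = (0 : Fin 4) := Fin.ext (by simpa using h)
        exact h0 ht
      have hrot := hC.rotate ht
      have hc0 : (Sum.inr 0 : Fin (3 * ℓ - 11) ⊕ Fin 4) ∈ (C.rotate _ ht).support :=
        WAux.caseC ht0 _ hrot
      apply h0
      have hCpos : 0 < C.length := by have := hC.three_le_length; omega
      have hrotlen : (C.rotate _ ht).length = C.length := by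
        have h1 := Walk.rotate_edges C _ ht
        have h2 := h1.perm.length_eq
        rwa [Walk.length_edges, Walk.length_edges] at h2
      rw [WAux.mem_support_closed _ (by omega)] at hc0
      have hm2 := (Walk.support_rotate C _ ht).perm.mem_iff.mp hc0
      exact (WAux.mem_support_closed C hCpos).mpr hm2
    · push_neg at hm
      obtain ⟨x, rfl⟩ : ∃ x, v = Sum.inl x := by
        cases v with
        | inl x => exact ⟨x, rfl⟩
        | inr t => exact absurd C.start_mem_support (hm t)
      exact WAux.caseA hℓ C hC hm
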